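/- If f(x) = a₀ ⊕ a·x is affine, then in the Grover iteration of Algorithm 3, the component |X⟩ orthogonal to |a⟩ has amplitude 0 in D_f|0⟩^⊗n, and hence after any number t of Grover iterations the measured outcome is a with probability 1. -/

import Mathlib

open Finset

/-- GF(2) inner product of two vectors in {0,1}^n. -/
def bip {n : ℕ} (a x : Fin n → ZMod 2) : ZMod 2 := ∑ i, a i * x i

/-- The character (-1)^b for b ∈ GF(2). -/
noncomputable def chi (b : ZMod 2) : ℝ := if b = 0 then 1 else -1

/-- Walsh transform of a Boolean function. -/
noncomputable def W {n : ℕ} (f : (Fin n → ZMod 2) → ZMod 2) (ω : Fin n → ZMod 2) : ℝ :=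
  ∑ x, chi (f x + bip ω x)

/-- Normalized Walsh transform of a Boolean function. -/
noncomputable def NW {n : ℕ} (f : (Fin n → ZMod 2) → ZMod 2) (ω : Fin n → ZMod 2) : ℝ :=
  (1 / 2 ^ n) * ∑ x, chi (f x + bip ω x)

/-- Hamming distance between two Boolean functions. -/
def hd {n : ℕ} (f g : (Fin n → ZMod 2) → ZMod 2) : ℕ :=
  (univ.filter fun x => f x ≠ g x).card

lemma chi_add_one (b : ZMod 2) : chi (b + 1) = -chi b := by
  fin_cases b <;> simp only [chi] <;> split_ifs <;> norm_num <;> simp_all <;> contradiction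

lemma chi_sq (b : ZMod 2) : chi b ^ 2 = 1 := by
  fin_cases b <;> simp [chi]

lemma bip_add_left {n : ℕ} (a z x : Fin n → ZMod 2) :
    bip (a + z) x = bip a x + bip z x := by
  simp [bip, add_mul, Finset.sum_add_distrib]

lemma sum_chi_bip {n : ℕ} (w : Fin n → ZMod 2) (c : ZMod 2) (hw : w ≠ 0) :
    ∑ x : Fin n → ZMod 2, chi (c + bip w x) = 0 := by
  obtain ⟨i, hi⟩ : ∃ i, w i ≠ 0 := by
    by_contra h
    push_neg at h
    exact hw (funext fun i => h i)
  have hwi : w i = 1 := by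
    have h1 : ∀ b : ZMod 2, b ≠ 0 → b = 1 := by decide
    exact h1 _ hi
  set e : Fin n → ZMod 2 := fun j => if j = i then 1 else 0 with he
  apply Finset.sum_ninvolution (fun x => x + e)
  · intro x
    have hb : bip w (x + e) = bip w x + 1 := by
      simp only [bip, Pi.add_apply, mul_add]
      rw [Finset.sum_add_distrib]
      congr 1
      have : ∀ j, w j * e j = if j = i then w i else 0 := by
        intro j
        by_cases hji : j = i <;> simp [he, hji]
      simp [this, hwi]
    rw [hb, ← add_assoc, chi_add_one]
    ring
  · intro x _ hx
    have : (x + e) i = x i := congrFun hx i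
    simp [he] at this
  · intro x; exact Finset.mem_univ _
  · intro x
    funext j
    have : e j + e j = 0 := by
      have : ∀ b : ZMod 2, b + b = 0 := by decide
      exact this _
    simp [Pi.add_apply, add_assoc, this]

lemma NW_eq {n : ℕ} (f : (Fin n → ZMod 2) → ZMod 2) (a₀ : ZMod 2)
    (a : Fin n → ZMod 2) (hf : ∀ x, f x = a₀ + bip a x) (z : Fin n → ZMod 2) :
    NW f z = if z = a then chi a₀ else 0 := by
  have key : ∀ x, f x + bip z x = a₀ + bip (a + z) x := by
    intro x
    rw [hf x, bip_add_left]
    ring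
  by_cases hz : z = a
  · subst hz
    have hb : ∀ x, f x + bip z x = a₀ := by
      intro x
      rw [hf x]
      have h2 : ∀ b : ZMod 2, b + b = 0 := by decide
      rw [add_assoc, h2, add_zero]
    simp only [NW, hb, if_pos rfl, Finset.sum_const, Finset.card_univ]
    have hcard : Fintype.card (Fin n → ZMod 2) = 2 ^ n := by
      simp [Fintype.card_fun]
    rw [hcard]
    simp [nsmul_eq_mul]
  · have hw : a + z ≠ 0 := by
      intro h
      apply hz
      funext j
      have hj : a j + z j = 0 := congrFun h j
      have : ∀ b c : ZMod 2, b + c = 0 → c = b := by decide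
      exact this _ _ hj
    simp only [NW, if_neg hz]
    have : ∑ x, chi (f x + bip z x) = 0 := by
      calc ∑ x, chi (f x + bip z x) = ∑ x, chi (a₀ + bip (a + z) x) := by
            apply Finset.sum_congr rfl; intro x _; rw [key x]
        _ = 0 := sum_chi_bip _ _ hw
    rw [this]; ring

/-- For affine f, the Deutsch–Jozsa state has no component orthogonal to |a⟩, and
after any number t of Grover iterations the measured outcome is a with probability 1. -/
theorem grover_affine_fixed (n : ℕ) (f : (Fin n → ZMod 2) → ZMod 2)
    (a₀ : ZMod 2) (a : Fin n → ZMod 2) (hf : ∀ x, f x = a₀ + bip a x) (t : ℕ) :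
    ∀ (ψ : (Fin n → ZMod 2) → ℝ), ψ = (fun z => NW f z) →
    ∀ (Og G : ((Fin n → ZMod 2) → ℝ) → ((Fin n → ZMod 2) → ℝ)),
      Og = (fun v z => if z = a then v z else -v z) →
      G = (fun v z => 2 * (∑ w, ψ w * Og v w) * ψ z - Og v z) →
      (∀ z, z ≠ a → ψ z = 0) ∧
      (∀ z, z ≠ a → (G^[t] ψ) z = 0) ∧ ((G^[t] ψ) a) ^ 2 = 1 := by
  intro ψ hψ Og G hOg hG
  have hψz : ∀ z, ψ z = if z = a then chi a₀ else 0 := by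
    intro z; rw [hψ]; exact NW_eq f a₀ a hf z
  have hzero : ∀ z, z ≠ a → ψ z = 0 := by
    intro z hz; rw [hψz z, if_neg hz]
  have hψa : ψ a = chi a₀ := by rw [hψz a, if_pos rfl]
  have hOgψ : Og ψ = ψ := by
    funext z
    rw [hOg]
    by_cases hz : z = a
    · simp [hz]
    · simp [hz, hzero z hz]
  have hsum : (∑ w, ψ w * ψ w) = 1 := by
    rw [Finset.sum_eq_single a]
    · rw [hψa, ← sq, chi_sq]
    · intro w _ hw; rw [hzero w hw]; ring
    · intro h; exact absurd (Finset.mem_univ a) h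
  have hGψ : G ψ = ψ := by
    funext z
    rw [hG]
    simp only [hOgψ, hsum]
    ring
  have hiter : G^[t] ψ = ψ := Function.iterate_fixed hGψ t
  refine ⟨hzero, ?_, ?_⟩
  · intro z hz; rw [hiter]; exact hzero z hz
  · rw [hiter, hψa, chi_sq]
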